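/- Let {{A_1,B_1},…,{A_s,B_s}} be a (16/ε)-well-separated pair decomposition of a finite metric space (P, δ) with 0 < ε ≤ 1, and choose representatives a_i ∈ A_i, b_i ∈ B_i. Let G be the graph on P with edges (a_i, b_i) weighted by δ(a_i, b_i). Then G is a (1+ε)-spanner: for all u, v ∈ P, d_G(u,v) ≤ (1+ε)δ(u,v). -/

import Mathlib

open scoped ENNReal

/-- The weighted length of a walk in a graph on a metric space, where each
edge `(u, v)` has weight `dist u v`. -/
noncomputable def walkDist {V : Type*} [MetricSpace V] {G : SimpleGraph V} {u v : V}
    (w : G.Walk u v) : ℝ≥0∞ :=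
  ((w.support.zip w.support.tail).map (fun e => ENNReal.ofReal (dist e.1 e.2))).sum

/-- The weighted shortest-path distance between two vertices (`∞` if unreachable). -/
noncomputable def spDist {V : Type*} [MetricSpace V] (G : SimpleGraph V) (u v : V) : ℝ≥0∞ :=
  ⨅ w : G.Walk u v, walkDist w

section SpannerHelpers

variable {V : Type*} [MetricSpace V] {G : SimpleGraph V}

lemma walkDist_nil {u : V} : walkDist (SimpleGraph.Walk.nil : G.Walk u u) = 0 := by
  simp [walkDist]

lemma walkDist_cons {u v w : V} (h : G.Adj u v) (p : G.Walk v w) :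
    walkDist (p.cons h) = ENNReal.ofReal (dist u v) + walkDist p := by
  have hs := p.support_eq_cons
  simp only [walkDist, SimpleGraph.Walk.support_cons, List.tail_cons]
  rw [hs]
  simp only [List.zip_cons_cons, List.map_cons, List.sum_cons, List.tail_cons]

lemma walkDist_append {u v w : V} (p : G.Walk u v) (q : G.Walk v w) :
    walkDist (p.append q) = walkDist p + walkDist q := by
  induction p with
  | nil => simp [walkDist_nil]
  | cons h p ih => simp [SimpleGraph.Walk.cons_append, walkDist_cons, ih, add_assoc]

lemma spDist_le_walk {u v : V} (w : G.Walk u v) : spDist G u v ≤ walkDist w :=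
  iInf_le _ w

lemma spDist_triangle (u v w : V) :
    spDist G u w ≤ spDist G u v + spDist G v w := by
  simp only [spDist, ENNReal.iInf_add, ENNReal.add_iInf]
  refine le_iInf fun p => le_iInf fun q => ?_
  first
  | exact (iInf_le _ (p.append q)).trans_eq (walkDist_append p q)
  | exact (iInf_le _ (q.append p)).trans_eq (by rw [walkDist_append, add_comm])

lemma spDist_le_of_adj {u v : V} (h : G.Adj u v) :
    spDist G u v ≤ ENNReal.ofReal (dist u v) := by
  refine (spDist_le_walk ((SimpleGraph.Walk.nil).cons h)).trans ?_
  rw [walkDist_cons, walkDist_nil, add_zero]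

end SpannerHelpers

/-- Given a `(16/ε)`-well-separated pair decomposition `{A i, B i}, i < s` of a
finite metric space `P` with `0 < ε ≤ 1`, and representatives `a i ∈ A i`,
`b i ∈ B i`, the graph with edges `(a i, b i)` is a `(1+ε)`-spanner. -/
theorem wspd_spanner {P : Type*} [MetricSpace P] [Fintype P] {s : ℕ}
    (ε : ℝ) (hε0 : 0 < ε) (hε1 : ε ≤ 1)
    (A B : Fin s → Set P)
    (hdisj : ∀ i, Disjoint (A i) (B i))
    (hsep : ∀ i, ∀ a ∈ A i, ∀ b ∈ B i,
      (16 / ε) * max (Metric.diam (A i)) (Metric.diam (B i)) ≤ dist a b)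
    (hcover : ∀ u v : P, u ≠ v →
      ∃! i : Fin s, (u ∈ A i ∧ v ∈ B i) ∨ (u ∈ B i ∧ v ∈ A i))
    (a b : Fin s → P) (ha : ∀ i, a i ∈ A i) (hb : ∀ i, b i ∈ B i) :
    ∀ u v : P,
      spDist (SimpleGraph.fromEdgeSet {e : Sym2 P | ∃ i : Fin s, e = s(a i, b i)}) u v
        ≤ ENNReal.ofReal ((1 + ε) * dist u v) := by
  set Gr := SimpleGraph.fromEdgeSet {e : Sym2 P | ∃ i : Fin s, e = s(a i, b i)} with hGr
  have hab : ∀ i, Gr.Adj (a i) (b i) := by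
    intro i
    rw [hGr, SimpleGraph.fromEdgeSet_adj]
    refine ⟨⟨i, rfl⟩, fun h => ?_⟩
    exact (Set.disjoint_left.mp (hdisj i) (ha i)) (h ▸ hb i)
  -- measure for strong induction
  let m : P → P → ℕ := fun u v =>
    (Finset.univ.filter (fun p : P × P => dist p.1 p.2 < dist u v)).card
  suffices H : ∀ n : ℕ, ∀ u v : P, m u v ≤ n →
      spDist Gr u v ≤ ENNReal.ofReal ((1 + ε) * dist u v) by
    intro u v; exact H (m u v) u v le_rfl
  intro n
  induction n with
  | zero =>
    intro u v hm
    have huv : u = v := by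
      by_contra h
      have hD : 0 < dist u v := dist_pos.mpr h
      have : (u, u) ∈ Finset.univ.filter (fun p : P × P => dist p.1 p.2 < dist u v) := by
        simp [hD]
      have hc := Finset.card_pos.mpr ⟨_, this⟩
      simp only [m] at hm
      omega
    subst huv
    have : spDist Gr u u ≤ 0 :=
      (spDist_le_walk (SimpleGraph.Walk.nil)).trans_eq walkDist_nil
    simpa [dist_self] using this
  | succ n ih =>
    intro u v hm
    by_cases huv : u = v
    · subst huv
      have : spDist Gr u u ≤ 0 :=
        (spDist_le_walk (SimpleGraph.Walk.nil)).trans_eq walkDist_nil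
      simpa [dist_self] using this
    · have hD : 0 < dist u v := dist_pos.mpr huv
      have hmono : ∀ x y : P, dist x y < dist u v → m x y < m u v := by
        intro x y h
        apply Finset.card_lt_card
        rw [Finset.ssubset_iff_of_subset]
        · exact ⟨(x, y), by simp [h], by simp⟩
        · intro p hp
          simp only [Finset.mem_filter, Finset.mem_univ, true_and] at hp ⊢
          exact hp.trans h
      have key : ∀ p q : P, Gr.Adj p q → dist u p ≤ ε / 16 * dist u v →
          dist v q ≤ ε / 16 * dist u v →
          spDist Gr u v ≤ ENNReal.ofReal ((1 + ε) * dist u v) := by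
        intro p q hadj hup hvq
        have hup' : dist u p < dist u v := by nlinarith
        have hvq' : dist v q < dist u v := by nlinarith
        have h1 : spDist Gr u p ≤ ENNReal.ofReal ((1 + ε) * dist u p) :=
          ih u p (by have := hmono u p hup'; omega)
        have h2 : spDist Gr q v ≤ ENNReal.ofReal ((1 + ε) * dist q v) :=
          ih q v (by have := hmono q v (by rwa [dist_comm q v]); omega)
        have h3 : spDist Gr p q ≤ ENNReal.ofReal (dist p q) := spDist_le_of_adj hadj
        calc spDist Gr u v ≤ spDist Gr u p + spDist Gr p q + spDist Gr q v := by
              refine (spDist_triangle u p v).trans ?_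
              rw [add_assoc]
              exact add_le_add (le_refl _) (spDist_triangle p q v)
          _ ≤ ENNReal.ofReal ((1 + ε) * dist u p) + ENNReal.ofReal (dist p q)
              + ENNReal.ofReal ((1 + ε) * dist q v) := add_le_add (add_le_add h1 h3) h2
          _ = ENNReal.ofReal ((1 + ε) * dist u p + dist p q + (1 + ε) * dist q v) := by
              rw [← ENNReal.ofReal_add (by positivity) (by positivity),
                ← ENNReal.ofReal_add (by positivity) (by positivity)]
          _ ≤ ENNReal.ofReal ((1 + ε) * dist u v) := by
              apply ENNReal.ofReal_le_ofReal
              have htri : dist p q ≤ dist u p + dist u v + dist v q := by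
                calc dist p q ≤ dist p u + dist u q := dist_triangle p u q
                  _ ≤ dist p u + (dist u v + dist v q) :=
                      add_le_add (le_refl _) (dist_triangle u v q)
                  _ = dist u p + dist u v + dist v q := by rw [dist_comm p u]; ring
              have hqv : dist q v = dist v q := dist_comm q v
              nlinarith [dist_nonneg (x := u) (y := p), dist_nonneg (x := v) (y := q)]
      obtain ⟨i, hi, -⟩ := hcover u v huv
      have hbd : ∀ (S : Set P), Bornology.IsBounded S := fun S => (Set.toFinite S).isBounded
      have hεne : ε ≠ 0 := ne_of_gt hε0
      rcases hi with ⟨huA, hvB⟩ | ⟨huB, hvA⟩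
      · have hmax : max (Metric.diam (A i)) (Metric.diam (B i)) ≤ ε / 16 * dist u v := by
          have h := hsep i u huA v hvB
          have h2 := mul_le_mul_of_nonneg_left h (by positivity : (0:ℝ) ≤ ε / 16)
          calc max (Metric.diam (A i)) (Metric.diam (B i))
              = ε / 16 * (16 / ε * max (Metric.diam (A i)) (Metric.diam (B i))) := by
                field_simp
            _ ≤ ε / 16 * dist u v := h2
        refine key (a i) (b i) (hab i) ?_ ?_
        · exact (Metric.dist_le_diam_of_mem (hbd _) huA (ha i)).trans
            ((le_max_left _ _).trans hmax)
        · exact (Metric.dist_le_diam_of_mem (hbd _) hvB (hb i)).trans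
            ((le_max_right _ _).trans hmax)
      · have hmax : max (Metric.diam (A i)) (Metric.diam (B i)) ≤ ε / 16 * dist u v := by
          have h := hsep i v hvA u huB
          rw [dist_comm v u] at h
          have h2 := mul_le_mul_of_nonneg_left h (by positivity : (0:ℝ) ≤ ε / 16)
          calc max (Metric.diam (A i)) (Metric.diam (B i))
              = ε / 16 * (16 / ε * max (Metric.diam (A i)) (Metric.diam (B i))) := by
                field_simp
            _ ≤ ε / 16 * dist u v := h2
        refine key (b i) (a i) (hab i).symm ?_ ?_
        · exact (Metric.dist_le_diam_of_mem (hbd _) huB (hb i)).trans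
            ((le_max_right _ _).trans hmax)
        · exact (Metric.dist_le_diam_of_mem (hbd _) hvA (ha i)).trans
            ((le_max_left _ _).trans hmax)
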